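/- arXiv:1602.04717 — 2 statements merged into one kernel-verified Lean document; each statement's English description precedes it below -/
import Mathlib

section
/- If G is a connected graph, L is a list assignment with |L(v)| ≥ deg(v) for all v, and |L(u)| > deg(u) for at least one vertex u, then G has an L-coloring. -/
open Finset

/-- A connected graph with lists of size at least the degrees, one strictly larger,
has a list coloring. -/
theorem stmt3 {V : Type*} [Fintype V] (G : SimpleGraph V) [DecidableRel G.Adj]
    (hG : G.Connected) (L : V → Finset ℕ)
    (hL : ∀ v, G.degree v ≤ (L v).card) (u : V) (hu : G.degree u < (L u).card) :
    ∃ φ : V → ℕ, (∀ v, φ v ∈ L v) ∧ ∀ x y, G.Adj x y → φ x ≠ φ y := by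
  classical
  suffices h : ∀ n (s : Finset V), s.card = n → u ∈ s →
      (∀ v ∈ s, ∃ p : G.Walk v u, ∀ x ∈ p.support, x ∈ s) →
      ∀ φ : V → ℕ, (∀ v, v ∉ s → φ v ∈ L v) →
      (∀ x y, x ∉ s → y ∉ s → G.Adj x y → φ x ≠ φ y) →
      ∃ ψ : V → ℕ, (∀ v, ψ v ∈ L v) ∧ ∀ x y, G.Adj x y → ψ x ≠ ψ y by
    exact h _ Finset.univ rfl (mem_univ u)
      (fun v _ => ((hG.preconnected v u).elim fun p => ⟨p, fun x _ => mem_univ x⟩))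
      (fun _ => 0) (by simp) (by simp)
  intro n
  induction n with
  | zero =>
    intro s hcard hus
    exact absurd (Finset.card_pos.2 ⟨u, hus⟩) (by omega)
  | succ n IH =>
    intro s hcard hus hwalk φ hφL hφprop
    by_cases hsing : ∀ v ∈ s, v = u
    · -- s = {u} : color u last
      have hs : s = {u} := by
        apply Finset.eq_singleton_iff_unique_mem.2 ⟨hus, hsing⟩
      set B : Finset V := (G.neighborFinset u).filter (fun x => x ∉ s) with hB
      have hBcard : (B.image φ).card < (L u).card := by
        calc (B.image φ).card ≤ B.card := card_image_le
          _ ≤ (G.neighborFinset u).card := card_filter_le _ _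
          _ = G.degree u := rfl
          _ < (L u).card := hu
      obtain ⟨c, hcmem⟩ : (L u \ B.image φ).Nonempty := by
        rw [← Finset.card_pos]
        have := Finset.le_card_sdiff (B.image φ) (L u)
        omega
      obtain ⟨hcL, hcim⟩ := Finset.mem_sdiff.1 hcmem
      refine ⟨Function.update φ u c, ?_, ?_⟩
      · intro v
        by_cases hv : v = u
        · subst hv; simpa using hcL
        · rw [Function.update_of_ne hv]
          exact hφL v (by simp [hs, hv])
      · intro x y hxy
        have hxyne := hxy.ne
        by_cases hx : x = u
        · subst hx
          rw [Function.update_self, Function.update_of_ne (Ne.symm hxyne)]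
          intro hc
          exact hcim (Finset.mem_image.2 ⟨y, by simp [hB, hs, hxy, Ne.symm hxyne], hc.symm⟩)
        · by_cases hy : y = u
          · subst hy
            rw [Function.update_self, Function.update_of_ne hx]
            intro hc
            exact hcim (Finset.mem_image.2 ⟨x, by simp [hB, hs, hxy.symm, hx], hc⟩)
          · rw [Function.update_of_ne hx, Function.update_of_ne hy]
            exact hφprop x y (by simp [hs, hx]) (by simp [hs, hy]) hxy
    · push_neg at hsing
      obtain ⟨v0, hv0s, hv0u⟩ := hsing
      -- walk-distance within s to u
      set P : V → ℕ → Prop := fun w k => ∃ p : G.Walk w u, p.length = k ∧ ∀ x ∈ p.support, x ∈ s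
        with hP
      have ex : ∀ w, w ∈ s → ∃ k, P w k := by
        intro w hw
        obtain ⟨p, hp⟩ := hwalk w hw
        exact ⟨p.length, p, rfl, hp⟩
      set D : V → ℕ := fun w => if h : ∃ k, P w k then Nat.find h else 0 with hD
      have hDfind : ∀ w (hw : ∃ k, P w k), D w = Nat.find hw := by
        intro w hw; simp [hD, hw]
      have hDle : ∀ w k, P w k → D w ≤ k := by
        intro w k hk
        rw [hDfind w ⟨k, hk⟩]
        exact Nat.find_le hk
      have hDspec : ∀ w (hw : w ∈ s), P w (D w) := by
        intro w hw
        rw [hDfind w (ex w hw)]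
        exact Nat.find_spec (ex w hw)
      obtain ⟨v, hvs, hvmax⟩ := s.exists_max_image D ⟨u, hus⟩
      -- D v ≥ 1
      have hDv0 : 1 ≤ D v0 := by
        by_contra hcon
        have h0 : D v0 = 0 := by omega
        obtain ⟨p, hlen, -⟩ := hDspec v0 hv0s
        rw [h0] at hlen
        exact hv0u (SimpleGraph.Walk.eq_of_length_eq_zero hlen)
      have hDv1 : 1 ≤ D v := le_trans hDv0 (hvmax v0 hv0s)
      have hvu : v ≠ u := by
        intro h; subst h
        obtain ⟨p, hlen, -⟩ := hDspec v hvs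
        have := hDle v 0 ⟨SimpleGraph.Walk.nil, rfl, by simp [hvs]⟩
        omega
      -- key : any x on shortest in-s walk of w, x ≠ w, has D x < D w
      have hdrop : ∀ w (hw : w ∈ s) (p : G.Walk w u), p.length = D w →
          (∀ x ∈ p.support, x ∈ s) → ∀ x ∈ p.support, x ≠ w → D x < D w := by
        intro w hw p hlen hsupp x hx hxw
        have htake := p.take_spec hx
        have hlens : (p.takeUntil x hx).length + (p.dropUntil x hx).length = p.length := by
          rw [← SimpleGraph.Walk.length_append, htake]
        have htpos : 1 ≤ (p.takeUntil x hx).length := by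
          rcases Nat.eq_zero_or_pos (p.takeUntil x hx).length with h0 | h1
          · exact absurd (SimpleGraph.Walk.eq_of_length_eq_zero h0).symm hxw
          · exact h1
        have hdsub : ∀ y ∈ (p.dropUntil x hx).support, y ∈ s := fun y hy =>
          hsupp y (SimpleGraph.Walk.support_dropUntil_subset p hx hy)
        have := hDle x (p.dropUntil x hx).length ⟨p.dropUntil x hx, rfl, hdsub⟩
        omega
      -- the shortest walk from v gives a neighbor v' of v in s, v' ≠ v
      obtain ⟨p, hlen, hsupp⟩ := hDspec v hvs
      obtain ⟨v', hadj, q, hq⟩ : ∃ (v' : V) (hadj : G.Adj v v') (q : G.Walk v' u), p = q.cons hadj := by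
        cases p with
        | nil => simp at hlen; omega
        | cons hadj q => exact ⟨_, hadj, q, rfl⟩
      have hv's : v' ∈ s := by
        apply hsupp
        rw [hq]
        simp [SimpleGraph.Walk.support_cons, SimpleGraph.Walk.start_mem_support]
      have hqlen : q.length + 1 = D v := by
        have : p.length = q.length + 1 := by rw [hq]; simp
        omega
      have hqsupp : ∀ x ∈ q.support, x ∈ s := by
        intro x hx
        apply hsupp
        rw [hq]
        simp [SimpleGraph.Walk.support_cons]
        right; exact hx
      have hDv' : D v' < D v := by
        have := hDle v' q.length ⟨q, rfl, hqsupp⟩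
        omega
      have hv'v : v' ≠ v := by
        intro h; rw [h] at hDv'; omega
      -- choose a color for v
      set B : Finset V := (G.neighborFinset v).filter (fun x => x ∉ s) with hB
      have hBcard : (B.image φ).card < (L v).card := by
        have hBsub : B ⊂ G.neighborFinset v := by
          refine Finset.ssubset_iff_of_subset (filter_subset _ _) |>.2 ⟨v', ?_, ?_⟩
          · simpa [SimpleGraph.mem_neighborFinset] using hadj
          · simp [hB, hv's]
        calc (B.image φ).card ≤ B.card := card_image_le
          _ < (G.neighborFinset v).card := Finset.card_lt_card hBsub
          _ = G.degree v := rfl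
          _ ≤ (L v).card := hL v
      obtain ⟨c, hcmem⟩ : (L v \ B.image φ).Nonempty := by
        rw [← Finset.card_pos]
        have := Finset.le_card_sdiff (B.image φ) (L v)
        omega
      obtain ⟨hcL, hcim⟩ := Finset.mem_sdiff.1 hcmem
      -- recurse on s.erase v with φ updated at v
      have hself : ¬ G.Adj v v := G.loopless.irrefl v
      refine IH (s.erase v) (by rw [Finset.card_erase_of_mem hvs, hcard]; rfl)
        (Finset.mem_erase.2 ⟨Ne.symm hvu, hus⟩) ?_ (Function.update φ v c) ?_ ?_
      · -- walks within s.erase v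
        intro w hw
        obtain ⟨hwv, hws⟩ := Finset.mem_erase.1 hw
        obtain ⟨pw, hlenw, hsw⟩ := hDspec w hws
        refine ⟨pw, fun x hx => Finset.mem_erase.2 ⟨?_, hsw x hx⟩⟩
        by_cases hxw : x = w
        · subst hxw; exact hwv
        · intro hxv
          have h1 := hdrop w hws pw hlenw hsw x hx hxw
          have h2 := hvmax w hws
          rw [hxv] at h1
          omega
      · -- list membership for colored vertices
        intro w hw
        rw [Finset.mem_erase] at hw
        push_neg at hw
        by_cases hwv : w = v
        · subst hwv; simpa using hcL
        · rw [Function.update_of_ne hwv]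
          exact hφL w (hw hwv)
      · -- properness outside s.erase v
        intro x y hx hy hxy
        rw [Finset.mem_erase] at hx hy
        push_neg at hx hy
        by_cases hxv : x = v
        · subst hxv
          have hyv : y ≠ x := hxy.ne'
          rw [Function.update_self, Function.update_of_ne hyv]
          intro hc
          exact hcim (Finset.mem_image.2 ⟨y, by
            simp [hB, SimpleGraph.mem_neighborFinset, hxy, hy hyv], hc.symm⟩)
        · by_cases hyv : y = v
          · subst hyv
            rw [Function.update_self, Function.update_of_ne hxv]
            intro hc
            exact hcim (Finset.mem_image.2 ⟨x, by
              simp [hB, SimpleGraph.mem_neighborFinset, hxy.symm, hx hxv], hc⟩)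
          · rw [Function.update_of_ne hxv, Function.update_of_ne hyv]
            exact hφprop x y (hx hxv) (hy hyv) hxy
end

section
/- If two distinct paths P1, P2 in a graph G both start at a vertex v and share their first edge vv', then their symmetric difference P1 △ P2 (as edge sets) contains a path between the other endpoints of P1 and P2 avoiding the edge vv'. -/
open SimpleGraph Finset

section Aux

variable {V : Type*} [DecidableEq V] {G : SimpleGraph V}

lemma aux_key {w a : V} (q : G.Walk w a) (y : V) (hy : y ∉ q.support) :
    (q.edges.filter (fun e => y ∈ e)).length = 0 := by
  rw [List.length_eq_zero_iff, List.filter_eq_nil_iff]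
  intro e he hye
  simp only [decide_eq_true_eq] at hye
  induction e with
  | h s t =>
    rcases Sym2.mem_iff.mp hye with rfl | rfl
    · exact hy (q.fst_mem_support_of_mem_edges he)
    · exact hy (q.snd_mem_support_of_mem_edges he)

/-- In a path, a vertex has odd edge-degree iff it is one of the two (distinct) endpoints. -/
lemma aux_path_parity {u a : V} (p : G.Walk u a) (hp : p.IsPath) (x : V) :
    Odd ((p.edges.filter (fun e => x ∈ e)).length) ↔ (x = u ∨ x = a) ∧ u ≠ a := by
  induction p with
  | nil => simp [Nat.odd_iff]
  | @cons u w a h q ih =>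
    rw [SimpleGraph.Walk.cons_isPath_iff] at hp
    obtain ⟨hq, hu⟩ := hp
    have hua : u ≠ a := fun hh => hu (hh ▸ q.end_mem_support)
    have huw : u ≠ w := h.ne
    simp only [SimpleGraph.Walk.edges_cons, List.filter_cons]
    by_cases hxu : x = u
    · have hmem : x ∈ s(u, w) := hxu ▸ Sym2.mem_mk_left u w
      simp only [hmem, decide_true, if_pos, List.length_cons, decide_eq_true_eq, if_true]
      rw [aux_key q x (hxu ▸ hu)]
      simp [hxu, hua]
    · by_cases hxw : x = w
      · have hmem : x ∈ s(u, w) := hxw ▸ Sym2.mem_mk_right u w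
        simp only [hmem, decide_eq_true_eq, if_true, List.length_cons]
        rw [Nat.odd_add_one, Nat.not_odd_iff_even, ← Nat.not_odd_iff_even, ih hq]
        subst hxw
        constructor
        · intro hh
          have hxa : x = a := by
            by_contra hxa
            exact hh ⟨Or.inl rfl, hxa⟩
          exact ⟨Or.inr hxa, hua⟩
        · rintro ⟨hx, -⟩ ⟨-, hxa⟩
          rcases hx with hx | rfl
          · exact hxu hx
          · exact hxa rfl
      · have hmem : x ∉ s(u, w) := by
          rw [Sym2.mem_iff]; push_neg; exact ⟨hxu, hxw⟩
        simp only [hmem, decide_eq_true_eq, if_false]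
        rw [ih hq]
        constructor
        · rintro ⟨hx, hwa⟩
          rcases hx with hx | rfl
          · exact absurd hx hxw
          · exact ⟨Or.inr rfl, hua⟩
        · rintro ⟨hx, -⟩
          rcases hx with hx | rfl
          · exact absurd hx hxu
          · exact ⟨Or.inr rfl, fun hwa => hxw hwa.symm⟩


/-- From a finset of edges in which every vertex has odd degree iff it equals `a` or `b`
(`a ≠ b`), extract a path from `a` to `b` using only those edges. -/
lemma aux_exists_path (G : SimpleGraph V) :
    ∀ (n : ℕ) (s : Finset (Sym2 V)), s.card = n → (↑s ⊆ G.edgeSet) →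
      ∀ a b : V, a ≠ b → (∀ x : V, Odd ((s.filter (fun e => x ∈ e)).card) ↔ x = a ∨ x = b) →
      ∃ W : G.Walk a b, W.IsPath ∧ ∀ e ∈ W.edges, e ∈ s := by
  intro n
  induction n using Nat.strong_induction_on with
  | _ n ih =>
    intro s hcard hsub a b hab hdeg
    have hodd : Odd ((s.filter (fun e => a ∈ e)).card) := (hdeg a).mpr (Or.inl rfl)
    have hne : (s.filter (fun e => a ∈ e)).Nonempty := by
      rw [← Finset.card_pos]
      rcases hodd with ⟨k, hk⟩; omega
    obtain ⟨e, he⟩ := hne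
    rw [Finset.mem_filter] at he
    obtain ⟨hes, hae⟩ := he
    obtain ⟨c, rfl⟩ : ∃ c, e = s(a, c) := by
      induction e with
      | h x y =>
        rcases Sym2.mem_iff.mp hae with rfl | rfl
        · exact ⟨y, rfl⟩
        · exact ⟨x, Sym2.eq_swap⟩
    have hadj : G.Adj a c := hsub hes
    have hac : a ≠ c := hadj.ne
    by_cases hcb : c = b
    · subst hcb
      exact ⟨SimpleGraph.Walk.cons hadj SimpleGraph.Walk.nil,
        by simp [SimpleGraph.Walk.IsPath.nil, hac],
        by simp [hes]⟩
    · set s' := s.erase s(a, c) with hs'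
      have hcard' : s'.card < n := by
        rw [← hcard]; exact Finset.card_erase_lt_of_mem hes
      have hsub' : ↑s' ⊆ G.edgeSet := fun e he => hsub (Finset.erase_subset _ _ he)
      have hdeg' : ∀ x : V, Odd ((s'.filter (fun e => x ∈ e)).card) ↔ x = c ∨ x = b := by
        intro x
        by_cases hx : x ∈ s(a, c)
        · have hins : s.filter (fun e => x ∈ e)
              = insert s(a,c) (s'.filter (fun e => x ∈ e)) := by
            ext f
            simp only [Finset.mem_filter, Finset.mem_insert, hs', Finset.mem_erase]
            constructor
            · rintro ⟨hf, hxf⟩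
              by_cases hfe : f = s(a, c)
              · exact Or.inl hfe
              · exact Or.inr ⟨⟨hfe, hf⟩, hxf⟩
            · rintro (rfl | ⟨⟨-, hf⟩, hxf⟩)
              · exact ⟨hes, hx⟩
              · exact ⟨hf, hxf⟩
          have hnm : s(a,c) ∉ s'.filter (fun e => x ∈ e) := by simp [hs']
          have hstep : Odd ((s'.filter (fun e => x ∈ e)).card) ↔ ¬ (x = a ∨ x = b) := by
            rw [← hdeg x, hins, Finset.card_insert_of_notMem hnm, Nat.odd_add_one]
            tauto
          rw [hstep]
          rcases Sym2.mem_iff.mp hx with rfl | rfl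
          · simp [hab, hac]
          · simp [Ne.symm hac, hcb]
        · have heq : s'.filter (fun e => x ∈ e) = s.filter (fun e => x ∈ e) := by
            ext f
            simp only [Finset.mem_filter, hs', Finset.mem_erase]
            constructor
            · rintro ⟨⟨-, hf⟩, hxf⟩; exact ⟨hf, hxf⟩
            · rintro ⟨hf, hxf⟩
              exact ⟨⟨fun hfe => hx (hfe ▸ hxf), hf⟩, hxf⟩
          have hxa : x ≠ a := fun hh => hx (hh ▸ Sym2.mem_mk_left a c)
          have hxc : x ≠ c := fun hh => hx (hh ▸ Sym2.mem_mk_right a c)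
          rw [heq, hdeg]
          constructor
          · rintro (rfl | rfl)
            · exact absurd rfl hxa
            · exact Or.inr rfl
          · rintro (rfl | rfl)
            · exact absurd rfl hxc
            · exact Or.inr rfl
      obtain ⟨W', hW'path, hW'edges⟩ := ih s'.card hcard' s' rfl hsub' c b hcb hdeg'
      by_cases haW : a ∈ W'.support
      · refine ⟨W'.dropUntil a haW, hW'path.dropUntil haW, fun e he => ?_⟩
        exact Finset.erase_subset _ _ (hW'edges e (W'.edges_dropUntil_subset haW he))
      · refine ⟨SimpleGraph.Walk.cons hadj W', hW'path.cons haW, fun e he => ?_⟩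
        rw [SimpleGraph.Walk.edges_cons, List.mem_cons] at he
        rcases he with rfl | he
        · exact hes
        · exact Finset.erase_subset _ _ (hW'edges e he)

end Aux

/-- If two distinct paths `P₁`, `P₂` both start at `v` and share their first edge `v v'`,
then the symmetric difference of their edge sets contains a path between their other
endpoints avoiding the edge `v v'`. -/
theorem stmt16 {V : Type*} (G : SimpleGraph V) (v v' a b : V)
    (P₁ : G.Walk v a) (P₂ : G.Walk v b) (h₁ : P₁.IsPath) (h₂ : P₂.IsPath)
    (hdist : P₁.edges ≠ P₂.edges)
    (hfirst₁ : P₁.edges.head? = some s(v, v')) (hfirst₂ : P₂.edges.head? = some s(v, v')) :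
    ∃ W : G.Walk a b, W.IsPath ∧ s(v, v') ∉ W.edges ∧
      ∀ e ∈ W.edges, (e ∈ P₁.edges ∧ e ∉ P₂.edges) ∨ (e ∈ P₂.edges ∧ e ∉ P₁.edges) := by
  classical
  have he₁ : s(v, v') ∈ P₁.edges := List.mem_of_mem_head? hfirst₁
  have he₂ : s(v, v') ∈ P₂.edges := List.mem_of_mem_head? hfirst₂
  have hva : v ≠ a := by
    rintro rfl
    rw [SimpleGraph.Walk.isPath_iff_eq_nil] at h₁
    subst h₁
    simp at hfirst₁
  have hvb : v ≠ b := by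
    rintro rfl
    rw [SimpleGraph.Walk.isPath_iff_eq_nil] at h₂
    subst h₂
    simp at hfirst₂
  by_cases hab : a = b
  · subst hab
    exact ⟨SimpleGraph.Walk.nil, SimpleGraph.Walk.IsPath.nil, by simp, by simp⟩
  · -- main case via parity
    set A := P₁.edges.toFinset with hA
    set B := P₂.edges.toFinset with hB
    set s : Finset (Sym2 V) := (A \ B) ∪ (B \ A) with hs
    have hmem : ∀ e : Sym2 V, e ∈ s ↔
        (e ∈ P₁.edges ∧ e ∉ P₂.edges) ∨ (e ∈ P₂.edges ∧ e ∉ P₁.edges) := by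
      intro e
      simp [hs, hA, hB, Finset.mem_union, Finset.mem_sdiff, List.mem_toFinset]
    have hsub : ↑s ⊆ G.edgeSet := by
      intro e he
      rw [Finset.mem_coe, hmem] at he
      rcases he with ⟨he, -⟩ | ⟨he, -⟩
      · exact P₁.edges_subset_edgeSet he
      · exact P₂.edges_subset_edgeSet he
    have hdeg : ∀ x : V, Odd ((s.filter (fun e => x ∈ e)).card) ↔ x = a ∨ x = b := by
      intro x
      set px : Sym2 V → Prop := fun e => x ∈ e with hpx
      -- card identities
      have hAsplit : (A.filter px).card
          = ((A \ B).filter px).card + ((A ∩ B).filter px).card := by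
        rw [← Finset.card_union_of_disjoint, ← Finset.filter_union,
          Finset.sdiff_union_inter]
        exact Finset.disjoint_filter_filter
          (Finset.disjoint_sdiff_inter A B)
      have hBsplit : (B.filter px).card
          = ((B \ A).filter px).card + ((B ∩ A).filter px).card := by
        rw [← Finset.card_union_of_disjoint, ← Finset.filter_union,
          Finset.sdiff_union_inter]
        exact Finset.disjoint_filter_filter
          (Finset.disjoint_sdiff_inter B A)
      rw [Finset.inter_comm] at hBsplit
      have hssplit : (s.filter px).card
          = ((A \ B).filter px).card + ((B \ A).filter px).card := by
        rw [hs, Finset.filter_union, Finset.card_union_of_disjoint]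
        exact Finset.disjoint_filter_filter disjoint_sdiff_sdiff
      -- list-finset transfer
      have hlA : (A.filter px).card = (P₁.edges.filter (fun e => x ∈ e)).length := by
        have heq : A.filter px = (P₁.edges.filter (fun e => x ∈ e)).toFinset := by
          ext f; simp [hA, hpx]
        rw [heq]
        exact List.toFinset_card_of_nodup ((h₁.edges_nodup).filter _)
      have hlB : (B.filter px).card = (P₂.edges.filter (fun e => x ∈ e)).length := by
        have heq : B.filter px = (P₂.edges.filter (fun e => x ∈ e)).toFinset := by
          ext f; simp [hB, hpx]
        rw [heq]
        exact List.toFinset_card_of_nodup ((h₂.edges_nodup).filter _)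
      have hp1 := aux_path_parity P₁ h₁ x
      have hp2 := aux_path_parity P₂ h₂ x
      rw [← hlA] at hp1
      rw [← hlB] at hp2
      have hoddsum : Odd ((s.filter px).card) ↔ Odd ((A.filter px).card + (B.filter px).card) := by
        rw [hAsplit, hBsplit, hssplit, Nat.odd_iff, Nat.odd_iff]
        omega
      rw [hoddsum, Nat.odd_add, hp1, ← Nat.not_odd_iff_even, hp2]
      simp only [hva, hvb, ne_eq, not_false_eq_true, and_true]
      by_cases hxv : x = v
      · subst hxv
        simp [hva, hvb]
      · by_cases hxa : x = a
        · subst hxa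
          simp [hxv, hab]
        · by_cases hxb : x = b
          · subst hxb
            simp [hxv, hxa]
          · simp [hxv, hxa, hxb]
    obtain ⟨W, hWpath, hWedges⟩ := aux_exists_path G s.card s rfl hsub a b hab hdeg
    refine ⟨W, hWpath, ?_, fun e he => (hmem e).mp (hWedges e he)⟩
    intro hmem0
    rcases (hmem _).mp (hWedges _ hmem0) with ⟨-, h'⟩ | ⟨-, h'⟩
    · exact h' he₂
    · exact h' he₁
end
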